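/- arXiv:1011.3761 — 2 statements merged into one kernel-verified Lean document; each statement's English description precedes it below -/
import Mathlib

section
/- (Theorem 1, inclusion of minimizer sets.) Let z^n be a minimizer over y^n ∈ 𝒴^n of the cost H(m(y^n)) + α·d_n(x^n,y^n), set m* = m(z^n), assume every entry of m* is strictly positive, and define λ_{β,b} = log((Σ_{β'∈𝒴} m*_{β',b})/m*_{β,b}). Then every minimizer w^n over y^n ∈ 𝒴^n of the linearized cost Σ_{β∈𝒴} Σ_{b∈𝒴^k} λ_{β,b}·m_{β,b}(y^n) + α·d_n(x^n,y^n) is also a minimizer of the original cost H(m(y^n)) + α·d_n(x^n,y^n). -/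
/-- The entropy `𝓗(v)` of the (unnormalized) nonnegative vector `v`:
`𝓗(v) = ∑ i, (v i / ‖v‖₁) * log (‖v‖₁ / v i)` if `v ≠ 0`, and `𝓗(0) = 0`,
where for a vector with nonnegative components `‖v‖₁ = ∑ i, v i`. -/
noncomputable def vecEnt {ι : Type*} [Fintype ι] (v : ι → ℝ) : ℝ :=
  @ite ℝ (v = 0) (Classical.propDecidable _) 0
    (∑ i, (v i / ∑ j, v j) * Real.log ((∑ j, v j) / v i))

/-- Conditional empirical entropy of a `|𝒴| × |𝒴|^k` matrix `m` with nonnegative entries: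
`H(m) = ∑_{b ∈ 𝒴^k} (∑_{β ∈ 𝒴} m_{β,b}) ⬝ 𝓗(m_{·,b})`. -/
noncomputable def condEnt {Y : Type*} [Fintype Y] {k : ℕ} (m : Y → (Fin k → Y) → ℝ) : ℝ :=
  ∑ b : Fin k → Y, (∑ β : Y, m β b) * vecEnt (fun β => m β b)

/-- The `(k+1)`-th order empirical count matrix of a cyclic sequence `y` of length `n`:
`m_{β,b}(y^n) = (1/n)·|{1 ≤ i ≤ n : (y_{i−k},…,y_{i−1}) = b and y_i = β}|`,
with indices taken cyclically (modulo `n`). -/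
noncomputable def empM {Y : Type*} [Fintype Y] [DecidableEq Y] (n k : ℕ) [NeZero n]
    (y : ZMod n → Y) (β : Y) (b : Fin k → Y) : ℝ :=
  ((Finset.univ.filter (fun i : ZMod n =>
      y i = β ∧ ∀ j : Fin k, y (i - (k : ZMod n) + ((j : ℕ) : ZMod n)) = b j)).card : ℝ) / n

/-- Average per-letter distortion `d_n(x^n, y^n) = (1/n) ∑_{i=1}^n d(x_i, y_i)`. -/
noncomputable def distn {X Y : Type*} (n : ℕ) [NeZero n] (d : X → Y → ℝ)
    (x : ZMod n → X) (y : ZMod n → Y) : ℝ :=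
  (∑ i : ZMod n, d (x i) (y i)) / n

/-- The energy (cost of problem (P1)): `𝓔(y^n) = H(m(y^n)) + α·d_n(x^n, y^n)`. -/
noncomputable def energy {X Y : Type*} [Fintype Y] [DecidableEq Y] (n k : ℕ) [NeZero n]
    (x : ZMod n → X) (α : ℝ) (d : X → Y → ℝ) (y : ZMod n → Y) : ℝ :=
  condEnt (fun β b => empM n k y β b) + α * distn n d x y

/-- The linearized cost (problem (P2)):
`∑_{β,b} λ_{β,b}·m_{β,b}(y^n) + α·d_n(x^n, y^n)`. -/
noncomputable def linCost {X Y : Type*} [Fintype Y] [DecidableEq Y] (n k : ℕ) [NeZero n]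
    (x : ZMod n → X) (α : ℝ) (d : X → Y → ℝ) (lam : Y → (Fin k → Y) → ℝ)
    (y : ZMod n → Y) : ℝ :=
  (∑ β : Y, ∑ b : Fin k → Y, lam β b * empM n k y β b) + α * distn n d x y

/-- The coefficient matrix `Λ(q)` of a positive matrix `q`:
`λ_{β,b} = log((∑_{β'} q_{β',b}) / q_{β,b})`. -/
noncomputable def lamOf {Y : Type*} [Fintype Y] {k : ℕ}
    (q : Y → (Fin k → Y) → ℝ) (β : Y) (b : Fin k → Y) : ℝ :=
  Real.log ((∑ β' : Y, q β' b) / q β b)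

lemma vecEnt_mul_of_ne {ι : Type*} [Fintype ι] (m : ι → ℝ) (h0 : m ≠ 0) :
    (∑ β, m β) * vecEnt m = ∑ β, m β * Real.log ((∑ j, m j) / m β) := by
  rw [vecEnt, if_neg h0, Finset.mul_sum]
  refine Finset.sum_congr rfl fun β _ => ?_
  by_cases hS : (∑ j, m j) = 0
  · simp [hS]
  · field_simp

lemma gibbs_ineq {Y : Type*} [Fintype Y] [Nonempty Y] (m q : Y → ℝ)
    (hm : ∀ β, 0 ≤ m β) (hq : ∀ β, 0 < q β) :
    (∑ β, m β) * vecEnt m ≤ ∑ β, m β * Real.log ((∑ β', q β') / q β) := by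
  by_cases h0 : m = 0
  · subst h0; simp [vecEnt]
  · have hS : 0 < ∑ β, m β := by
      rcases Function.ne_iff.mp h0 with ⟨β, hβ⟩
      exact Finset.sum_pos' (fun i _ => hm i)
        ⟨β, Finset.mem_univ β, lt_of_le_of_ne (hm β) (Ne.symm hβ)⟩
    have hT : 0 < ∑ β', q β' := Finset.sum_pos (fun i _ => hq i) Finset.univ_nonempty
    set S := ∑ β, m β with hSdef
    set T := ∑ β', q β' with hTdef
    rw [vecEnt_mul_of_ne m h0]
    have key : ∀ β, m β * Real.log (S / m β) - m β * Real.log (T / q β)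
        ≤ S * q β / T - m β := by
      intro β
      rcases eq_or_lt_of_le (hm β) with hmB | hmB
      · rw [← hmB]; simp
        exact div_nonneg (mul_nonneg (le_of_lt hS) (le_of_lt (hq β))) (le_of_lt hT)
      · have h1 : Real.log (S / m β) - Real.log (T / q β)
            = Real.log ((S * q β) / (m β * T)) := by
          rw [Real.log_div (ne_of_gt hS) (ne_of_gt hmB),
              Real.log_div (ne_of_gt hT) (ne_of_gt (hq β)),
              Real.log_div (mul_ne_zero (ne_of_gt hS) (ne_of_gt (hq β))) (mul_ne_zero (ne_of_gt hmB) (ne_of_gt hT)),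
              Real.log_mul (ne_of_gt hS) (ne_of_gt (hq β)),
              Real.log_mul (ne_of_gt hmB) (ne_of_gt hT)]
          ring
        have h2 : Real.log ((S * q β) / (m β * T)) ≤ (S * q β) / (m β * T) - 1 :=
          Real.log_le_sub_one_of_pos (div_pos (mul_pos hS (hq β)) (mul_pos hmB hT))
        calc m β * Real.log (S / m β) - m β * Real.log (T / q β)
            = m β * (Real.log (S / m β) - Real.log (T / q β)) := by ring
          _ = m β * Real.log ((S * q β) / (m β * T)) := by rw [h1]
          _ ≤ m β * ((S * q β) / (m β * T) - 1) :=
              mul_le_mul_of_nonneg_left h2 (le_of_lt hmB)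
          _ = S * q β / T - m β := by
              field_simp
    have hsum := Finset.sum_le_sum (fun β (_ : β ∈ Finset.univ) => key β)
    have hRHS : ∑ β, (S * q β / T - m β) = 0 := by
      rw [Finset.sum_sub_distrib]
      have h1 : ∑ β, S * q β / T = S := by
        rw [← Finset.sum_div, ← Finset.mul_sum, ← hTdef,
          mul_div_assoc, div_self (ne_of_gt hT), mul_one]
      rw [h1, ← hSdef, sub_self]
    rw [Finset.sum_sub_distrib, hRHS] at hsum
    have : ∑ β, m β * Real.log (T / q β)
        = ∑ β, m β * Real.log ((∑ β', q β') / q β) := rfl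
    linarith [hsum]

lemma condEnt_le_lin {Y : Type*} [Fintype Y] [Nonempty Y] {k : ℕ}
    (m q : Y → (Fin k → Y) → ℝ) (hm : ∀ β b, 0 ≤ m β b) (hq : ∀ β b, 0 < q β b) :
    condEnt m ≤ ∑ β : Y, ∑ b : Fin k → Y, lamOf q β b * m β b := by
  rw [Finset.sum_comm]
  unfold condEnt
  refine Finset.sum_le_sum fun b _ => ?_
  calc (∑ β, m β b) * vecEnt (fun β => m β b)
      ≤ ∑ β, m β b * Real.log ((∑ β', q β' b) / q β b) :=
        gibbs_ineq (fun β => m β b) (fun β => q β b) (fun β => hm β b) (fun β => hq β b)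
    _ = ∑ β, lamOf q β b * m β b := by
        refine Finset.sum_congr rfl fun β _ => ?_
        rw [lamOf, mul_comm]

lemma condEnt_eq_lin {Y : Type*} [Fintype Y] [Nonempty Y] {k : ℕ}
    (q : Y → (Fin k → Y) → ℝ) (hq : ∀ β b, 0 < q β b) :
    condEnt q = ∑ β : Y, ∑ b : Fin k → Y, lamOf q β b * q β b := by
  rw [Finset.sum_comm]
  unfold condEnt
  refine Finset.sum_congr rfl fun b _ => ?_
  have h0 : (fun β => q β b) ≠ 0 := by
    intro h
    have := congrFun h (Classical.arbitrary Y)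
    exact absurd this (ne_of_gt (hq _ b))
  rw [vecEnt_mul_of_ne _ h0]
  refine Finset.sum_congr rfl fun β _ => ?_
  rw [lamOf, mul_comm]

lemma empM_nonneg {Y : Type*} [Fintype Y] [DecidableEq Y] (n k : ℕ) [NeZero n]
    (y : ZMod n → Y) (β : Y) (b : Fin k → Y) : 0 ≤ empM n k y β b := by
  unfold empM; positivity

/-- Theorem 1, inclusion of minimizer sets: with `z^n` a minimizer of the
original cost, `m* = m(z^n)` strictly positive and `λ` the tangent coefficients at `m*`,
every minimizer of the linearized cost is also a minimizer of the original cost. -/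
theorem stmt8 {X Y : Type*} [Fintype X] [Fintype Y] [Nonempty X] [Nonempty Y] [DecidableEq Y]
    (n k : ℕ) [NeZero n] (hk : 0 < k)
    (x : ZMod n → X) (α : ℝ) (hα : 0 ≤ α)
    (d : X → Y → ℝ) (hd : ∀ a b, 0 ≤ d a b)
    (z : ZMod n → Y)
    (hz : ∀ y : ZMod n → Y, energy n k x α d z ≤ energy n k x α d y)
    (hpos : ∀ (β : Y) (b : Fin k → Y), 0 < empM n k z β b)
    (w : ZMod n → Y)
    (hw : ∀ y : ZMod n → Y,
      linCost n k x α d (lamOf (empM n k z)) w ≤ linCost n k x α d (lamOf (empM n k z)) y) :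
    ∀ y : ZMod n → Y, energy n k x α d w ≤ energy n k x α d y := by
  intro y
  have h1 : energy n k x α d w ≤ linCost n k x α d (lamOf (empM n k z)) w := by
    unfold energy linCost
    have := condEnt_le_lin (fun β b => empM n k w β b) (empM n k z)
      (fun β b => empM_nonneg n k w β b) hpos
    linarith
  have h2 : linCost n k x α d (lamOf (empM n k z)) z = energy n k x α d z := by
    unfold energy linCost
    have := condEnt_eq_lin (empM n k z) hpos
    simp only [this]
  calc energy n k x α d w ≤ linCost n k x α d (lamOf (empM n k z)) w := h1
    _ ≤ linCost n k x α d (lamOf (empM n k z)) z := hw z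
    _ = energy n k x α d z := h2
    _ ≤ energy n k x α d y := hz y
end

section
/- (Lemma of Section 7: the optimal coefficient matrix minimizes φ over the discrete set of coefficient matrices.) Let x̂ ∈ 𝒴^n be a minimizer over y^n ∈ 𝒴^n of the energy 𝓔(y^n) = H(m(y^n)) + α·d_n(x^n,y^n), and assume every entry of m(x̂) is strictly positive. For a |𝒴|×|𝒴|^k matrix m with strictly positive entries let Λ(m) be the matrix with entries log((Σ_{β'∈𝒴} m_{β',b})/m_{β,b}), and define φ(Λ) = min_{z^n∈𝒴^n} [ Σ_{β,b} Λ_{β,b}·m_{β,b}(z^n) + α·d_n(x^n,z^n) ]. Then φ(Λ(m(x̂))) = 𝓔(x̂), and for every y^n ∈ 𝒴^n such that every entry of m(y^n) is strictly positive, φ(Λ(m(y^n))) ≥ φ(Λ(m(x̂))). -/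
/-- `φ(Λ) = min_{z^n ∈ 𝒴^n} [ ∑_{β,b} Λ_{β,b}·m_{β,b}(z^n) + α·d_n(x^n,z^n) ]`. -/
noncomputable def phi {X Y : Type*} [Fintype Y] [DecidableEq Y] (n k : ℕ) [NeZero n]
    (x : ZMod n → X) (α : ℝ) (d : X → Y → ℝ) (lam : Y → (Fin k → Y) → ℝ) : ℝ :=
  ⨅ z : ZMod n → Y, linCost n k x α d lam z

lemma xlog_le {x y : ℝ} (hx : 0 ≤ x) (hy : 0 < y) : x * Real.log (y / x) ≤ y - x := by
  rcases eq_or_lt_of_le hx with h | h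
  · simp [← h]; linarith
  · have hl := Real.log_le_sub_one_of_pos (div_pos hy h)
    have := mul_le_mul_of_nonneg_left hl (le_of_lt h)
    calc x * Real.log (y / x) ≤ x * (y / x - 1) := this
      _ = y - x := by field_simp

lemma gibbs {Y : Type*} [Fintype Y] [Nonempty Y] (p q : Y → ℝ)
    (hp : ∀ β, 0 ≤ p β) (hq : ∀ β, 0 < q β) :
    (∑ β, p β) * vecEnt p ≤ ∑ β, p β * Real.log ((∑ β', q β') / q β) := by
  by_cases h0 : p = 0
  · simp [h0, vecEnt]
  · have hSp : 0 < ∑ β, p β := by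
      rcases Function.ne_iff.mp h0 with ⟨β, hβ⟩
      exact Finset.sum_pos' (fun i _ => hp i)
        ⟨β, Finset.mem_univ β, lt_of_le_of_ne (hp β) (Ne.symm (by simpa using hβ))⟩
    have hSq : 0 < ∑ β, q β := Finset.sum_pos (fun i _ => hq i) Finset.univ_nonempty
    have hL : (∑ β, p β) * vecEnt p = ∑ β, p β * Real.log ((∑ β', p β') / p β) := by
      rw [vecEnt, if_neg h0, Finset.mul_sum]
      refine Finset.sum_congr rfl fun β _ => ?_
      field_simp
    rw [hL]
    have key : ∀ β, p β * Real.log ((∑ β', p β') / p β) ≤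
        p β * Real.log ((∑ β', q β') / q β) - p β + q β * (∑ β', p β') / (∑ β', q β') := by
      intro β
      rcases eq_or_lt_of_le (hp β) with h | h
      · rw [← h]
        have h0' : (0:ℝ) ≤ q β * (∑ β', p β') / (∑ β', q β') :=
          div_nonneg (mul_nonneg (hq β).le (Finset.sum_nonneg fun i _ => hp i)) hSq.le
        simp only [zero_mul, zero_add, zero_sub, sub_zero]
        linarith
      · have hy : 0 < q β * (∑ β', p β') / (∑ β', q β') :=
          div_pos (mul_pos (hq β) hSp) hSq
        have hmain := xlog_le (le_of_lt h) hy
        have e1 : Real.log ((q β * (∑ β', p β') / (∑ β', q β')) / p β)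
            = Real.log (q β) + Real.log (∑ β', p β') - Real.log (∑ β', q β')
              - Real.log (p β) := by
          rw [Real.log_div (ne_of_gt hy) (ne_of_gt h),
              Real.log_div (ne_of_gt (mul_pos (hq β) hSp)) (ne_of_gt hSq),
              Real.log_mul (ne_of_gt (hq β)) (ne_of_gt hSp)]
        have e2 : Real.log ((∑ β', p β') / p β)
            = Real.log (∑ β', p β') - Real.log (p β) :=
          Real.log_div (ne_of_gt hSp) (ne_of_gt h)
        have e3 : Real.log ((∑ β', q β') / q β)
            = Real.log (∑ β', q β') - Real.log (q β) :=
          Real.log_div (ne_of_gt hSq) (ne_of_gt (hq β))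
        rw [e1] at hmain
        rw [e2, e3]
        nlinarith [hmain]
    calc ∑ β, p β * Real.log ((∑ β', p β') / p β)
        ≤ ∑ β, (p β * Real.log ((∑ β', q β') / q β) - p β
            + q β * (∑ β', p β') / (∑ β', q β')) :=
          Finset.sum_le_sum fun β _ => key β
      _ = ∑ β, p β * Real.log ((∑ β', q β') / q β) := by
          have hq' : ∑ β, (q β * (∑ β', p β') / (∑ β', q β')) = ∑ β, p β := by
            rw [← Finset.sum_div, ← Finset.sum_mul]
            field_simp
          rw [Finset.sum_add_distrib, Finset.sum_sub_distrib, hq']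
          ring

lemma gibbs_eq {Y : Type*} [Fintype Y] [Nonempty Y] (q : Y → ℝ) (hq : ∀ β, 0 < q β) :
    (∑ β, q β) * vecEnt q = ∑ β, q β * Real.log ((∑ β', q β') / q β) := by
  have h0 : q ≠ 0 := by
    intro h
    exact absurd (congrFun h (Classical.arbitrary Y)) (ne_of_gt (hq _))
  have hSq : 0 < ∑ β, q β := Finset.sum_pos (fun i _ => hq i) Finset.univ_nonempty
  rw [vecEnt, if_neg h0, Finset.mul_sum]
  refine Finset.sum_congr rfl fun β _ => ?_
  field_simp

lemma energy_le_linCost {X Y : Type*} [Fintype Y] [DecidableEq Y] [Nonempty Y]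
    (n k : ℕ) [NeZero n] (x : ZMod n → X) (α : ℝ) (d : X → Y → ℝ)
    (q : Y → (Fin k → Y) → ℝ) (hq : ∀ β b, 0 < q β b) (z : ZMod n → Y) :
    energy n k x α d z ≤ linCost n k x α d (lamOf q) z := by
  unfold energy linCost condEnt lamOf
  refine add_le_add ?_ le_rfl
  rw [Finset.sum_comm]
  refine Finset.sum_le_sum fun b _ => ?_
  calc (∑ β, empM n k z β b) * vecEnt (fun β => empM n k z β b)
      ≤ ∑ β, empM n k z β b * Real.log ((∑ β', q β' b) / q β b) :=
        gibbs _ _ (fun β => empM_nonneg n k z β b) (fun β => hq β b)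
    _ = ∑ β, Real.log ((∑ β', q β' b) / q β b) * empM n k z β b := by
        simp [mul_comm]

lemma linCost_eq_energy {X Y : Type*} [Fintype Y] [DecidableEq Y] [Nonempty Y]
    (n k : ℕ) [NeZero n] (x : ZMod n → X) (α : ℝ) (d : X → Y → ℝ)
    (z : ZMod n → Y) (hq : ∀ β b, 0 < empM n k z β b) :
    linCost n k x α d (lamOf (empM n k z)) z = energy n k x α d z := by
  unfold energy linCost condEnt lamOf
  refine congrArg (· + α * distn n d x z) ?_
  rw [Finset.sum_comm]
  refine Finset.sum_congr rfl fun b _ => ?_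
  rw [gibbs_eq (fun β => empM n k z β b) (fun β => hq β b)]
  simp [mul_comm]

/-- Lemma of Section 7: if `x̂` minimizes the energy and `m(x̂)` is strictly
positive, then `φ(Λ(m(x̂))) = 𝓔(x̂)`, and `Λ(m(x̂))` minimizes `φ` over the discrete set of
coefficient matrices derived from sequences. -/
theorem stmt11 {X Y : Type*} [Fintype X] [Fintype Y] [Nonempty X] [Nonempty Y] [DecidableEq Y]
    (n k : ℕ) [NeZero n] (hk : 0 < k)
    (x : ZMod n → X) (α : ℝ) (hα : 0 ≤ α)
    (d : X → Y → ℝ) (hd : ∀ a b, 0 ≤ d a b)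
    (xhat : ZMod n → Y)
    (hmin : ∀ y : ZMod n → Y, energy n k x α d xhat ≤ energy n k x α d y)
    (hpos : ∀ (β : Y) (b : Fin k → Y), 0 < empM n k xhat β b) :
    phi n k x α d (lamOf (empM n k xhat)) = energy n k x α d xhat ∧
      ∀ y : ZMod n → Y, (∀ (β : Y) (b : Fin k → Y), 0 < empM n k y β b) →
        phi n k x α d (lamOf (empM n k xhat)) ≤ phi n k x α d (lamOf (empM n k y)) := by
  have bdd : ∀ lam : Y → (Fin k → Y) → ℝ,
      BddBelow (Set.range (linCost n k x α d lam)) := fun lam =>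
    Set.Finite.bddBelow (Set.finite_range _)
  have h1 : phi n k x α d (lamOf (empM n k xhat)) ≤ energy n k x α d xhat := by
    rw [← linCost_eq_energy n k x α d xhat hpos]
    exact ciInf_le (bdd _) xhat
  have h2 : energy n k x α d xhat ≤ phi n k x α d (lamOf (empM n k xhat)) :=
    le_ciInf fun z => (hmin z).trans (energy_le_linCost n k x α d _ hpos z)
  have heq := le_antisymm h1 h2
  refine ⟨heq, fun y hy => ?_⟩
  rw [heq]
  exact le_ciInf fun z => (hmin z).trans (energy_le_linCost n k x α d _ hy z)
end
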